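/- arXiv:2009.10921 — 2 statements merged into one kernel-verified Lean document; each statement's English description precedes it below -/
import Mathlib

section
/- (Feynman's disentangling theorem) For time-ordered exponentials of bounded operator-valued continuous functions A, B on [τ₀, τ₁]: 𝕋exp(∫_{τ₀}^{τ₁}(A(τ')+B(τ'))dτ') = 𝕋exp(∫_{τ₀}^{τ₁}A(τ')dτ') · 𝕋exp(∫_{τ₀}^{τ₁}B̃(τ')dτ'), where B̃(τ) = [𝕋exp(∫_{τ₀}^{τ}A dτ')]^{−1} · B(τ) · 𝕋exp(∫_{τ₀}^{τ}A dτ'). -/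
open ContinuousLinearMap

/-- Feynman's disentangling theorem for time-ordered exponentials, phrased via
the defining ODEs of the time-ordered exponentials. -/
theorem feynman_disentangling
    {E : Type*} [NormedAddCommGroup E] [NormedSpace ℂ E] [FiniteDimensional ℂ E]
    (τ₀ τ₁ : ℝ) (hτ : τ₀ ≤ τ₁)
    (A B : ℝ → E →L[ℂ] E) (hA : Continuous A) (hB : Continuous B)
    (UA UAB UB VA : ℝ → E →L[ℂ] E)
    (hUA0 : UA τ₀ = 1) (hUAB0 : UAB τ₀ = 1) (hUB0 : UB τ₀ = 1)
    (hUA : ∀ τ, HasDerivAt UA (A τ ∘L UA τ) τ)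
    (hUAB : ∀ τ, HasDerivAt UAB ((A τ + B τ) ∘L UAB τ) τ)
    (hVA : ∀ τ, VA τ ∘L UA τ = 1 ∧ UA τ ∘L VA τ = 1)
    (hUB : ∀ τ, HasDerivAt UB (((VA τ ∘L B τ) ∘L UA τ) ∘L UB τ) τ) :
    UAB τ₁ = UA τ₁ ∘L UB τ₁ := by
  -- The product W = UA ∘ UB satisfies the same ODE as UAB.
  set W : ℝ → E →L[ℂ] E := fun τ => UA τ ∘L UB τ with hWdef
  have hbil : IsBoundedBilinearMap ℝ
      (fun p : (E →L[ℂ] E) × (E →L[ℂ] E) => p.1 ∘L p.2) := by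
    refine ⟨fun f₁ f₂ g => add_comp _ _ _, fun c f g => smul_comp _ _ _,
      fun f g₁ g₂ => comp_add _ _ _, fun c f g => comp_smul _ _ _,
      ⟨1, one_pos, fun f g => by simpa using opNorm_comp_le f g⟩⟩
  have hW' : ∀ τ, HasDerivAt W ((A τ + B τ) ∘L W τ) τ := by
    intro τ
    have H1 := hbil.hasFDerivAt (UA τ, UB τ)
    have H2 := H1.comp τ (HasFDerivAt.prodMk (hUA τ).hasFDerivAt (hUB τ).hasFDerivAt)
    have h : HasDerivAt W ((A τ ∘L UA τ) ∘L UB τ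
        + UA τ ∘L (((VA τ ∘L B τ) ∘L UA τ) ∘L UB τ)) τ := by
      have H3 := H2.hasDerivAt
      refine HasDerivAt.congr_deriv H3 ?_
      simp [hbil.deriv_apply, add_comm]
    have h2 : ∀ y : E, UA τ (VA τ y) = y := fun y => by
      have := DFunLike.congr_fun (hVA τ).2 y
      simpa using this
    have heq : (A τ + B τ) ∘L W τ
        = (A τ ∘L UA τ) ∘L UB τ + UA τ ∘L (((VA τ ∘L B τ) ∘L UA τ) ∘L UB τ) := by
      ext x
      simp [W, h2]
    rw [heq]
    exact h
  -- A uniform bound for ‖A + B‖ on the compact interval.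
  obtain ⟨C, hC⟩ : ∃ C, ∀ t ∈ Set.Icc τ₀ τ₁, ‖A t + B t‖ ≤ C := by
    obtain ⟨C, hC⟩ := (isCompact_Icc : IsCompact (Set.Icc τ₀ τ₁)).exists_bound_of_continuousOn
      ((hA.add hB).continuousOn (s := Set.Icc τ₀ τ₁))
    exact ⟨C, hC⟩
  set K : NNReal := ⟨max C 0, le_max_right _ _⟩ with hKdef
  -- The (clamped) vector field.
  set v : ℝ → (E →L[ℂ] E) → (E →L[ℂ] E) :=
    fun t x => (A ↑(Set.projIcc τ₀ τ₁ hτ t) + B ↑(Set.projIcc τ₀ τ₁ hτ t)) ∘L x with hvdef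
  have hv : ∀ t, LipschitzWith K (v t) := by
    intro t
    have hb : ‖compL ℂ E E E (A ↑(Set.projIcc τ₀ τ₁ hτ t) + B ↑(Set.projIcc τ₀ τ₁ hτ t))‖₊ ≤ K := by
      have h1 : ‖compL ℂ E E E (A ↑(Set.projIcc τ₀ τ₁ hτ t) + B ↑(Set.projIcc τ₀ τ₁ hτ t))‖
          ≤ ‖A ↑(Set.projIcc τ₀ τ₁ hτ t) + B ↑(Set.projIcc τ₀ τ₁ hτ t)‖ := by
        calc ‖compL ℂ E E E (A ↑(Set.projIcc τ₀ τ₁ hτ t) + B ↑(Set.projIcc τ₀ τ₁ hτ t))‖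
            ≤ ‖compL ℂ E E E‖ * ‖A ↑(Set.projIcc τ₀ τ₁ hτ t) + B ↑(Set.projIcc τ₀ τ₁ hτ t)‖ :=
              (compL ℂ E E E).le_opNorm _
          _ ≤ 1 * ‖A ↑(Set.projIcc τ₀ τ₁ hτ t) + B ↑(Set.projIcc τ₀ τ₁ hτ t)‖ :=
              mul_le_mul_of_nonneg_right (norm_compL_le ℂ E E E) (norm_nonneg _)
          _ = _ := one_mul _
      have h2 := hC _ (Set.projIcc τ₀ τ₁ hτ t).2
      have : ‖compL ℂ E E E (A ↑(Set.projIcc τ₀ τ₁ hτ t) + B ↑(Set.projIcc τ₀ τ₁ hτ t))‖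
          ≤ max C 0 := le_trans h1 (le_trans h2 (le_max_left _ _))
      exact this
    exact (compL ℂ E E E (A ↑(Set.projIcc τ₀ τ₁ hτ t)
      + B ↑(Set.projIcc τ₀ τ₁ hτ t))).lipschitz.weaken hb
  have key : Set.EqOn UAB W (Set.Icc τ₀ τ₁) := by
    apply ODE_solution_unique (v := v) hv
    · exact fun t _ => (hUAB t).continuousAt.continuousWithinAt
    · intro t ht
      have : v t (UAB t) = (A t + B t) ∘L UAB t := by
        rw [hvdef]; simp [Set.projIcc_of_mem hτ (Set.mem_Icc_of_Ico ht)]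
      rw [this]
      exact (hUAB t).hasDerivWithinAt
    · exact fun t _ => (hW' t).continuousAt.continuousWithinAt
    · intro t ht
      have : v t (W t) = (A t + B t) ∘L W t := by
        rw [hvdef]; simp [Set.projIcc_of_mem hτ (Set.mem_Icc_of_Ico ht)]
      rw [this]
      exact (hW' t).hasDerivWithinAt
    · simp [W, hUAB0, hUA0, hUB0, ContinuousLinearMap.one_def]
  exact key (Set.right_mem_Icc.2 hτ)
end

section
/- (First-order Trotter error bound for two bounded operators) For bounded operators A, B on a finite-dimensional Hilbert space and t ∈ ℝ, ‖e^{−i(A+B)t} − e^{−iAt}e^{−iBt}‖ ≤ ‖[A,B]‖·t²/2. -/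
set_option synthInstance.maxHeartbeats 1000000
set_option maxHeartbeats 1000000

open ContinuousLinearMap NormedSpace

namespace TrotterAux

variable {H : Type*} [NormedAddCommGroup H] [InnerProductSpace ℂ H] [CompleteSpace H]

noncomputable def E (M : H →L[ℂ] H) (s : ℝ) : H →L[ℂ] H :=
  exp (s • ((-Complex.I) • M))

lemma E_hasDerivAt (M : H →L[ℂ] H) (s : ℝ) :
    HasDerivAt (E M) (E M s * ((-Complex.I) • M)) s :=
  hasDerivAt_exp_smul_const ((-Complex.I) • M) s

lemma E_continuous (M : H →L[ℂ] H) : Continuous (E M) :=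
  continuous_iff_continuousAt.2 fun s => (E_hasDerivAt M s).continuousAt

lemma E_mul_E_neg (M : H →L[ℂ] H) (s : ℝ) : E M s * E M (-s) = 1 := by
  let +nondep : NormedAlgebra ℚ (H →L[ℂ] H) := .restrictScalars ℚ ℂ _
  rw [E, E, ← NormedSpace.exp_add_of_commute]
  · rw [← add_smul]
    simp [NormedSpace.exp_zero]
  · rw [show (-s) • ((-Complex.I) • M) = -(s • ((-Complex.I) • M)) from neg_smul s _]
    exact (Commute.refl _).neg_right

lemma E_zero (M : H →L[ℂ] H) : E M 0 = 1 := by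
  rw [E, zero_smul]; exact NormedSpace.exp_zero

lemma star_smul_neg_I (M : H →L[ℂ] H) (hM : adjoint M = M) (s : ℝ) :
    star (s • ((-Complex.I) • M)) = -(s • ((-Complex.I) • M)) := by
  rw [show s • ((-Complex.I) • M) = ((s : ℂ) * -Complex.I) • M by match_scalars; simp,
    star_smul, star_eq_adjoint, hM, ← neg_smul]
  congr 1
  simp [Complex.ext_iff]

lemma E_norm_le_one (M : H →L[ℂ] H) (hM : adjoint M = M) (s : ℝ) : ‖E M s‖ ≤ 1 := by
  have hstar : star (E M s) * E M s = 1 := by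
    let +nondep : NormedAlgebra ℚ (H →L[ℂ] H) := .restrictScalars ℚ ℂ _
    rw [E, star_exp, star_smul_neg_I M hM s, ← NormedSpace.exp_add_of_commute]
    · rw [neg_add_cancel]
      exact NormedSpace.exp_zero
    · exact (Commute.refl _).neg_left
  have h1 : ‖E M s‖ * ‖E M s‖ = ‖(1 : H →L[ℂ] H)‖ := by
    rw [← CStarRing.norm_star_mul_self, hstar]
  have h2 : ‖(1 : H →L[ℂ] H)‖ ≤ 1 := by
    rw [ContinuousLinearMap.one_def]; exact ContinuousLinearMap.norm_id_le
  nlinarith [norm_nonneg (E M s)]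

lemma commute_E (M : H →L[ℂ] H) (s : ℝ) : Commute ((-Complex.I) • M) (E M s) :=
  Commute.exp_right ((Commute.refl _).smul_right s)

lemma comm_deriv (A B : H →L[ℂ] H) (u : ℝ) :
    HasDerivAt (fun u => E A (-u) * (B * E A u))
      (E A (-u) * ((B * ((-Complex.I) • A) - ((-Complex.I) • A) * B) * E A u)) u := by
  set N := (-Complex.I) • A with hN
  have h1 : HasDerivAt (fun u : ℝ => E A (-u)) (-(E A (-u) * N)) u := by
    have h := HasDerivAt.scomp (𝕜 := ℝ) (𝕜' := ℝ) u (E_hasDerivAt A (-u)) (hasDerivAt_neg u)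
    rw [show -(E A (-u) * N) = (-1:ℝ) • (E A (-u) * N) by module]
    exact h
  have h2 : HasDerivAt (fun u : ℝ => B * E A u) (B * (E A u * N)) u :=
    (E_hasDerivAt A u).const_mul B
  have := h1.mul h2
  refine this.congr_deriv ?_
  have hc : E A u * N = N * E A u := ((commute_E A u)).symm
  rw [hc]
  noncomm_ring

lemma norm_BN_NB (A B : H →L[ℂ] H) :
    ‖B * ((-Complex.I) • A) - ((-Complex.I) • A) * B‖ = ‖A * B - B * A‖ := by
  rw [mul_smul_comm, smul_mul_assoc, ← smul_sub, norm_smul]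
  simp [← norm_sub_rev (B * A)]

lemma comm_bound (A B : H →L[ℂ] H) (hA : adjoint A = A) (s : ℝ) (hs : 0 ≤ s) :
    ‖B * E A s - E A s * B‖ ≤ s * ‖A * B - B * A‖ := by
  set C := ‖A * B - B * A‖ with hC
  set N := (-Complex.I) • A with hN
  set k : ℝ → H →L[ℂ] H := fun u => E A (-u) * (B * E A u) with hk
  set k' : ℝ → H →L[ℂ] H := fun u => E A (-u) * ((B * N - N * B) * E A u) with hk'
  have hkd : ∀ u ∈ Set.Icc (0:ℝ) s, HasDerivWithinAt k (k' u) (Set.Icc 0 s) u :=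
    fun u _ => (comm_deriv A B u).hasDerivWithinAt
  have hbound : ∀ u ∈ Set.Icc (0:ℝ) s, ‖k' u‖ ≤ C := by
    intro u _
    calc ‖k' u‖ ≤ ‖E A (-u)‖ * ‖(B * N - N * B) * E A u‖ := norm_mul_le _ _
      _ ≤ 1 * (‖B * N - N * B‖ * ‖E A u‖) :=
        mul_le_mul (E_norm_le_one A hA _) (norm_mul_le _ _) (norm_nonneg _) zero_le_one
      _ ≤ 1 * (‖B * N - N * B‖ * 1) := by
        have := E_norm_le_one A hA u
        have h0 := norm_nonneg (B * N - N * B)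
        nlinarith
      _ = C := by rw [one_mul, mul_one, hN, norm_BN_NB]
  have hmvt := (convex_Icc (0:ℝ) s).norm_image_sub_le_of_norm_hasDerivWithin_le hkd hbound
    (Set.left_mem_Icc.2 hs) (Set.right_mem_Icc.2 hs)
  have hks : ‖k s - k 0‖ ≤ C * s := by
    simpa [abs_of_nonneg hs] using hmvt
  have hid : B * E A s - E A s * B = E A s * (k s - k 0) := by
    have h1 : E A s * k s = B * E A s := by
      rw [hk]
      calc E A s * (E A (-s) * (B * E A s)) = (E A s * E A (-s)) * (B * E A s) := by
            rw [mul_assoc]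
        _ = B * E A s := by rw [E_mul_E_neg, one_mul]
    have h0 : k 0 = B := by simp [hk, E_zero]
    rw [mul_sub, h1, h0]
  calc ‖B * E A s - E A s * B‖ = ‖E A s * (k s - k 0)‖ := by rw [hid]
    _ ≤ ‖E A s‖ * ‖k s - k 0‖ := norm_mul_le _ _
    _ ≤ 1 * (C * s) := by
      have := E_norm_le_one A hA s
      have := norm_nonneg (k s - k 0)
      nlinarith
    _ = s * C := by ring


theorem main (A B : H →L[ℂ] H) (hA : adjoint A = A) (hB : adjoint B = B)
    (t : ℝ) (ht : 0 ≤ t) :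
    ‖E (A + B) t - E A t * E B t‖ ≤ t ^ 2 / 2 * ‖A * B - B * A‖ := by
  set C := ‖A * B - B * A‖ with hC
  set NA := (-Complex.I) • A with hNA
  set NB := (-Complex.I) • B with hNB
  set f : ℝ → H →L[ℂ] H := fun s => E (A + B) (t - s) * (E A s * E B s) with hf
  set f' : ℝ → H →L[ℂ] H :=
    fun s => E (A + B) (t - s) * ((E A s * NB - NB * E A s) * E B s) with hf'
  have hd : ∀ s : ℝ, HasDerivAt f (f' s) s := by
    intro s
    have g1 : HasDerivAt (fun s : ℝ => E (A + B) (t - s))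
        (-(E (A + B) (t - s) * ((-Complex.I) • (A + B)))) s := by
      have h := HasDerivAt.scomp (𝕜 := ℝ) (𝕜' := ℝ) s
        (E_hasDerivAt (A + B) (t - s)) ((hasDerivAt_id s).const_sub t)
      rw [show -(E (A + B) (t - s) * ((-Complex.I) • (A + B)))
          = (-1 : ℝ) • (E (A + B) (t - s) * ((-Complex.I) • (A + B))) by module]
      exact h
    have g2 : HasDerivAt (fun s : ℝ => E A s * E B s)
        ((E A s * NA) * E B s + E A s * (E B s * NB)) s :=
      (E_hasDerivAt A s).mul (E_hasDerivAt B s)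
    have := g1.mul g2
    refine this.congr_deriv ?_
    have hcA : E A s * NA = NA * E A s := (commute_E A s).symm
    have hcB : E B s * NB = NB * E B s := (commute_E B s).symm
    have hsplit : (-Complex.I) • (A + B) = NA + NB := smul_add _ _ _
    rw [hsplit, hcA, hcB]
    simp only [hf', mul_add, add_mul, mul_sub, sub_mul, neg_mul, mul_neg, mul_assoc]
    abel
  have hcont : Continuous f' := by
    apply Continuous.mul
    · exact (E_continuous (A + B)).comp (continuous_const.sub continuous_id)
    · exact (((E_continuous A).mul continuous_const).sub
        (continuous_const.mul (E_continuous A))).mul (E_continuous B)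
  have hint : IntervalIntegrable f' MeasureTheory.volume 0 t :=
    hcont.intervalIntegrable 0 t
  have heq : ∫ s in (0:ℝ)..t, f' s = f t - f 0 :=
    intervalIntegral.integral_eq_sub_of_hasDerivAt (fun s _ => hd s) hint
  have hf0 : f 0 = E (A + B) t := by simp [hf, E_zero]
  have hft : f t = E A t * E B t := by simp [hf, E_zero]
  have hbound : ∀ s ∈ Set.Ioc (0:ℝ) t, ‖f' s‖ ≤ s * C := by
    intro s hs
    calc ‖f' s‖ ≤ ‖E (A + B) (t - s)‖ * ‖(E A s * NB - NB * E A s) * E B s‖ := norm_mul_le _ _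
      _ ≤ 1 * (‖E A s * NB - NB * E A s‖ * ‖E B s‖) := by
        refine mul_le_mul (E_norm_le_one _ ?_ _) (norm_mul_le _ _) (norm_nonneg _) zero_le_one
        rw [map_add, hA, hB]
      _ ≤ ‖NB * E A s - E A s * NB‖ := by
        rw [one_mul, ← norm_sub_rev]
        have h1 := E_norm_le_one B hB s
        have h2 := norm_nonneg (NB * E A s - E A s * NB)
        nlinarith
      _ = ‖B * E A s - E A s * B‖ := by
        rw [hNB, smul_mul_assoc, mul_smul_comm, ← smul_sub, norm_smul]
        simp
      _ ≤ s * ‖A * B - B * A‖ := comm_bound A B hA s hs.1.le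
  have hnorm : ‖∫ s in (0:ℝ)..t, f' s‖ ≤ t ^ 2 / 2 * C := by
    have hgint : IntervalIntegrable (fun s : ℝ => s * C) MeasureTheory.volume 0 t :=
      (continuous_id.mul continuous_const).intervalIntegrable 0 t
    have h := intervalIntegral.norm_integral_le_abs_of_norm_le
      (f := f') (μ := MeasureTheory.volume) (a := 0) (b := t)
      (g := fun s => s * C) ?_ hgint
    · calc ‖∫ s in (0:ℝ)..t, f' s‖ ≤ |∫ s in (0:ℝ)..t, s * C| := h
        _ = t ^ 2 / 2 * C := by
          rw [intervalIntegral.integral_mul_const, integral_id]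
          have hC0 : (0:ℝ) ≤ C := norm_nonneg _
          rw [abs_of_nonneg (by nlinarith [sq_nonneg t])]
          ring
    · rw [Set.uIoc_of_le ht]
      exact MeasureTheory.ae_restrict_of_forall_mem measurableSet_Ioc hbound
  calc ‖E (A + B) t - E A t * E B t‖ = ‖f 0 - f t‖ := by rw [hf0, hft]
    _ = ‖∫ s in (0:ℝ)..t, f' s‖ := by rw [heq, norm_sub_rev]
    _ ≤ t ^ 2 / 2 * C := hnorm

end TrotterAux

open ContinuousLinearMap

/-- First-order Trotter error bound for two self-adjoint operators. -/
theorem trotter_error_bound (n : ℕ)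
    (A B : EuclideanSpace ℂ (Fin n) →L[ℂ] EuclideanSpace ℂ (Fin n))
    (hA : adjoint A = A) (hB : adjoint B = B) (t : ℝ) (ht : 0 ≤ t) :
    ‖NormedSpace.exp ((-Complex.I * (t : ℂ)) • (A + B)) -
        NormedSpace.exp ((-Complex.I * (t : ℂ)) • A) *
          NormedSpace.exp ((-Complex.I * (t : ℂ)) • B)‖
      ≤ t ^ 2 / 2 * ‖A * B - B * A‖ := by
  have key : ∀ M : EuclideanSpace ℂ (Fin n) →L[ℂ] EuclideanSpace ℂ (Fin n),
      NormedSpace.exp ((-Complex.I * (t : ℂ)) • M) = TrotterAux.E M t := by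
    intro M
    rw [TrotterAux.E]
    congr 1
    match_scalars
    simp [mul_comm]
  rw [key, key, key]
  exact TrotterAux.main A B hA hB t ht
end
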